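/- arXiv:1403.1069 — 3 statements merged into one kernel-verified Lean document; each statement's English description precedes it below -/
import Mathlib

section
/- Let α : ℤ/nℤ → ℝ with ∑_k α_k = n-1, and c_k = ∑_l ω^{-kl} α_l. If |c_k| = 1 for all k ≠ 0, then for all i ≠ j (mod n): ∑_{k=0}^{n-1} α_{i-k} α_{j-k} = n-2. -/
theorem stmt_3 (n : ℕ) [NeZero n] (hn : 2 ≤ n) (α : ZMod n → ℝ) (c : ZMod n → ℂ)
    (hc : ∀ k : ZMod n,
      c k = ∑ l : ZMod n,
        Complex.exp (2 * Real.pi * Complex.I / n) ^ (-(k * l)).val * (α l : ℂ))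
    (hsum : ∑ k : ZMod n, α k = n - 1)
    (habs : ∀ k : ZMod n, k ≠ 0 → ‖c k‖ = 1) :
    ∀ i j : ZMod n, i ≠ j → ∑ k : ZMod n, α (i - k) * α (j - k) = n - 2 := by
  intro i j hij
  have hn0 : (n : ℕ) ≠ 0 := NeZero.ne n
  set ζ : ℂ := Complex.exp (2 * Real.pi * Complex.I / n) with hζdef
  have hζ : IsPrimitiveRoot ζ n := Complex.isPrimitiveRoot_exp n hn0
  have hζ1 : ζ ^ n = 1 := hζ.pow_eq_one
  set ψ : AddChar (ZMod n) ℂ := AddChar.zmodChar n hζ1 with hψdef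
  have hψapp : ∀ a : ZMod n, ψ a = ζ ^ a.val := fun a => rfl
  have hψprim : ψ.IsPrimitive := by
    have := AddChar.zmodChar_primitive_of_primitive_root n hζ
    exact this
  have habsψ : ∀ a : ZMod n, ‖ψ a‖ = 1 := by
    intro a
    rw [hψapp, norm_pow]
    have : ‖ζ‖ = 1 := by
      rw [hζdef, show (2 * (Real.pi : ℂ) * Complex.I / n)
          = ((2 * Real.pi / n : ℝ) : ℂ) * Complex.I by push_cast; ring]
      exact Complex.norm_exp_ofReal_mul_I _
    rw [this, one_pow]
  have e_conj : ∀ a : ZMod n, (starRingEnd ℂ) (ψ a) = ψ (-a) := by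
    intro a
    have h0 : ψ a ≠ 0 := by
      intro h; have := habsψ a; rw [h] at this; simp at this
    have h1 : ψ a * ψ (-a) = 1 := by
      rw [← AddChar.map_add_eq_mul]; simp
    have h2 : ψ a * (starRingEnd ℂ) (ψ a) = 1 := by
      rw [Complex.mul_conj, Complex.normSq_eq_norm_sq, habsψ]; norm_num
    exact mul_left_cancel₀ h0 (h2.trans h1.symm)
  have sum_ψ : ∀ e : ZMod n, e ≠ 0 → ∑ k : ZMod n, ψ (k * e) = 0 := by
    intro e he
    have := AddChar.sum_mulShift e hψprim
    rw [if_neg he] at this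
    exact_mod_cast this
  set d : ZMod n := i - j with hd'
  have hd : d ≠ 0 := sub_ne_zero.mpr hij
  have hcorr : ∑ k : ZMod n, α (i - k) * α (j - k) = ∑ m : ZMod n, α (m + d) * α m := by
    refine Fintype.sum_equiv (Equiv.subLeft j) _ _ fun m => ?_
    rw [Equiv.subLeft_apply]
    have h1 : i - m = (j - m) + d := by rw [hd']; ring
    rw [h1]
  rw [hcorr]
  set S : ℂ := ∑ m : ZMod n, (α (m + d) : ℂ) * (α m : ℂ) with hS
  have key : (n : ℂ) * S = ∑ k : ZMod n, c k * (starRingEnd ℂ) (c k) * ψ (k * d) := by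
    have expand : ∀ k : ZMod n,
        c k * (starRingEnd ℂ) (c k) * ψ (k * d)
          = ∑ l : ZMod n, ∑ m : ZMod n,
              (α l : ℂ) * (α m : ℂ) * ψ (k * (m - l + d)) := by
      intro k
      have hck : c k = ∑ l : ZMod n, ψ (-(k * l)) * (α l : ℂ) := by
        rw [hc k]
        exact Finset.sum_congr rfl fun l _ => by rw [hψapp]
      have hckc : (starRingEnd ℂ) (c k) = ∑ m : ZMod n, ψ (k * m) * (α m : ℂ) := by
        rw [hck, map_sum]
        refine Finset.sum_congr rfl fun m _ => ?_
        rw [map_mul, e_conj, Complex.conj_ofReal, neg_neg]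
      rw [hckc, hck, Finset.sum_mul_sum, Finset.sum_mul]
      refine Finset.sum_congr rfl fun l _ => ?_
      rw [Finset.sum_mul]
      refine Finset.sum_congr rfl fun m _ => ?_
      have harg : k * (m - l + d) = -(k * l) + (k * m + k * d) := by ring
      rw [harg, AddChar.map_add_eq_mul, AddChar.map_add_eq_mul]
      ring
    rw [Finset.sum_congr rfl fun k _ => expand k]
    rw [Finset.sum_comm]
    have swap2 : ∀ l : ZMod n,
        ∑ k : ZMod n, ∑ m : ZMod n, (α l : ℂ) * (α m : ℂ) * ψ (k * (m - l + d))
          = ∑ m : ZMod n, (α l : ℂ) * (α m : ℂ) * ∑ k : ZMod n, ψ (k * (m - l + d)) := by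
      intro l
      rw [Finset.sum_comm]
      exact Finset.sum_congr rfl fun m _ => by rw [Finset.mul_sum]
    rw [Finset.sum_congr rfl fun l _ => swap2 l]
    have inner : ∀ l m : ZMod n,
        (∑ k : ZMod n, ψ (k * (m - l + d))) = if l = m + d then (n : ℂ) else 0 := by
      intro l m
      by_cases h : l = m + d
      · have h0 : m - l + d = 0 := by rw [h]; ring
        rw [h0, if_pos h]
        simp only [mul_zero, AddChar.map_zero_eq_one]
        simp [Finset.sum_const, ZMod.card]
      · rw [if_neg h]
        have hne : m - l + d ≠ 0 := by
          intro h0; apply h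
          have : l = m + d - (m - l + d) := by ring
          rw [this, h0, sub_zero]
        exact sum_ψ _ hne
    have eval : ∀ l : ZMod n,
        ∑ m : ZMod n, (α l : ℂ) * (α m : ℂ) * ∑ k : ZMod n, ψ (k * (m - l + d))
          = (α l : ℂ) * (α (l - d) : ℂ) * n := by
      intro l
      rw [Finset.sum_congr rfl fun m _ => by rw [inner l m]]
      have step : ∀ m : ZMod n,
          (α l : ℂ) * (α m : ℂ) * (if l = m + d then (n : ℂ) else 0)
            = if m = l - d then (α l : ℂ) * (α (l - d) : ℂ) * n else 0 := by
        intro m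
        by_cases h : m = l - d
        · rw [if_pos h, if_pos (show l = m + d by rw [h]; ring), h]
        · rw [if_neg h, if_neg (fun hl : l = m + d => h (by rw [hl]; ring)), mul_zero]
      rw [Finset.sum_congr rfl fun m _ => step m]
      rw [Finset.sum_ite_eq' Finset.univ (l - d)]
      rw [if_pos (Finset.mem_univ _)]
    rw [Finset.sum_congr rfl fun l _ => eval l]
    rw [hS, Finset.mul_sum]
    refine Fintype.sum_equiv (Equiv.addRight d) _ _ fun m => ?_
    simp only [Equiv.coe_addRight]
    rw [show m + d - d = m by ring]
    ring
  have hc0 : c 0 = (n : ℂ) - 1 := by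
    rw [hc 0]
    have h0 : ∀ l : ZMod n, ζ ^ (-((0 : ZMod n) * l)).val * (α l : ℂ) = (α l : ℂ) := by
      intro l
      rw [show -((0 : ZMod n) * l) = 0 by ring, ZMod.val_zero, pow_zero, one_mul]
    rw [Finset.sum_congr rfl fun l _ => h0 l, ← Complex.ofReal_sum, hsum]
    push_cast; ring
  have rhs_eval : ∑ k : ZMod n, c k * (starRingEnd ℂ) (c k) * ψ (k * d)
      = ((n : ℂ) - 1) ^ 2 - 1 := by
    have split := Finset.add_sum_erase Finset.univ
      (fun k : ZMod n => c k * (starRingEnd ℂ) (c k) * ψ (k * d)) (Finset.mem_univ (0 : ZMod n))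
    rw [← split]
    have h0term : c 0 * (starRingEnd ℂ) (c 0) * ψ ((0 : ZMod n) * d) = ((n : ℂ) - 1) ^ 2 := by
      rw [hc0, zero_mul, AddChar.map_zero_eq_one, mul_one]
      rw [map_sub, map_one, Complex.conj_natCast]
      ring
    have hrest : ∑ k ∈ Finset.univ.erase (0 : ZMod n),
        c k * (starRingEnd ℂ) (c k) * ψ (k * d) = -1 := by
      have habs1 : ∀ k ∈ Finset.univ.erase (0 : ZMod n),
          c k * (starRingEnd ℂ) (c k) * ψ (k * d) = ψ (k * d) := by
        intro k hk
        have hk0 : k ≠ 0 := Finset.ne_of_mem_erase hk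
        rw [Complex.mul_conj, Complex.normSq_eq_norm_sq, habs k hk0]
        norm_num
      rw [Finset.sum_congr rfl habs1]
      have split2 := Finset.add_sum_erase Finset.univ
        (fun k : ZMod n => ψ (k * d)) (Finset.mem_univ (0 : ZMod n))
      rw [sum_ψ d hd] at split2
      simp only [zero_mul, AddChar.map_zero_eq_one] at split2
      linear_combination split2
    beta_reduce
    rw [h0term, hrest]
    ring
  have hnne : (n : ℂ) ≠ 0 := Nat.cast_ne_zero.mpr hn0
  have hfinal : S = (n : ℂ) - 2 := by
    have h2 : (n : ℂ) * S = (n : ℂ) * ((n : ℂ) - 2) := by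
      rw [key.trans rhs_eval]; ring
    exact mul_left_cancel₀ hnne h2
  have hcast : ((∑ m : ZMod n, α (m + d) * α m : ℝ) : ℂ) = S := by
    rw [hS]; push_cast; ring
  have hfin2 : ((∑ m : ZMod n, α (m + d) * α m : ℝ) : ℂ) = (((n : ℝ) - 2 : ℝ) : ℂ) := by
    rw [hcast, hfinal]; push_cast; ring
  exact_mod_cast hfin2
end

section
/- Let α : ℤ/nℤ → ℝ with ∑_k α_k = n-1 and c_k = ∑_l ω^{-kl} α_l its DFT. Then α satisfies the cyclic autocorrelation conditions ∑_{k=0}^{n-1} α_{i-k} α_{j-k} = δ_{ij} + n - 2 for all i, j if and only if |c_k| = 1 for all k = 1,...,n-1. -/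
open Finset Complex

namespace Stmt4Aux

noncomputable def ee (n : ℕ) (x : ZMod n) : ℂ :=
  Complex.exp (2 * Real.pi * Complex.I / n) ^ x.val

variable (n : ℕ) [NeZero n]

lemma hprim : IsPrimitiveRoot (Complex.exp (2 * Real.pi * Complex.I / n)) n :=
  Complex.isPrimitiveRoot_exp n (NeZero.ne n)

lemma pow_mod (a : ℕ) :
    Complex.exp (2 * Real.pi * Complex.I / n) ^ a
      = Complex.exp (2 * Real.pi * Complex.I / n) ^ (a % n) := by
  conv_lhs => rw [← Nat.div_add_mod a n]
  rw [pow_add, pow_mul, (hprim n).pow_eq_one, one_pow, one_mul]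

lemma ee_add (x y : ZMod n) : ee n (x + y) = ee n x * ee n y := by
  rw [ee, ee, ee, ← pow_add, ZMod.val_add, ← pow_mod]

lemma ee_zero : ee n 0 = 1 := by simp [ee]

lemma ee_ne_one (k : ZMod n) (hk : k ≠ 0) : ee n k ≠ 1 := by
  have h1 : 0 < k.val := Nat.pos_of_ne_zero (fun h => hk (by rwa [← ZMod.val_eq_zero]))
  exact (hprim n).pow_ne_one_of_pos_of_lt h1.ne' (ZMod.val_lt k)

lemma ee_ne_zero (x : ZMod n) : ee n x ≠ 0 := by
  have : ee n (-x) * ee n x = 1 := by rw [← ee_add, neg_add_cancel, ee_zero n]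
  intro h; rw [h, mul_zero] at this; exact one_ne_zero (α := ℂ) this.symm

lemma conj_ee (x : ZMod n) : (starRingEnd ℂ) (ee n x) = ee n (-x) := by
  have h1 : ee n (-x) * ee n x = 1 := by rw [← ee_add, neg_add_cancel, ee_zero n]
  have habs : ‖ee n x‖ = 1 := by
    have h2' : (ee n x) ^ n = 1 := by
      rw [ee, ← pow_mul, pow_mul', (hprim n).pow_eq_one, one_pow]
    have h2 : ‖ee n x‖ ^ n = 1 := by rw [← norm_pow, h2', norm_one]
    have h3 : (0:ℝ) ≤ ‖ee n x‖ := norm_nonneg _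
    rcases (pow_eq_one_iff_cases.mp h2) with h | h | h
    · exact absurd h (NeZero.ne n)
    · exact h
    · nlinarith [h.1]
  have h2 : (starRingEnd ℂ) (ee n x) * ee n x = 1 := by
    rw [mul_comm, Complex.mul_conj, ← Complex.sq_norm, habs]; norm_num
  exact mul_right_cancel₀ (ee_ne_zero n x) (h2.trans h1.symm)

lemma orth (k : ZMod n) : ∑ l : ZMod n, ee n (k * l) = if k = 0 then (n : ℂ) else 0 := by
  split_ifs with h
  · simp [h, ee_zero, Finset.card_univ]
  · have key : ∑ l : ZMod n, ee n (k * (l + 1)) = ∑ l : ZMod n, ee n (k * l) :=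
      Fintype.sum_equiv (Equiv.addRight 1) _ _ (fun l => rfl)
    have key2 : (ee n k - 1) * ∑ l : ZMod n, ee n (k * l) = 0 := by
      rw [sub_mul, one_mul, sub_eq_zero, Finset.mul_sum]
      rw [← key]
      congr 1 with l
      rw [mul_add, mul_one, ee_add, mul_comm]
    rcases mul_eq_zero.mp key2 with h' | h'
    · exact absurd (by linear_combination h') (ee_ne_one n k h)
    · exact h'

end Stmt4Aux

open Finset Complex Stmt4Aux in
theorem stmt_4 (n : ℕ) [NeZero n] (hn : 2 ≤ n) (α : ZMod n → ℝ) (c : ZMod n → ℂ)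
    (hc : ∀ k : ZMod n,
      c k = ∑ l : ZMod n,
        Complex.exp (2 * Real.pi * Complex.I / n) ^ (-(k * l)).val * (α l : ℂ))
    (hsum : ∑ k : ZMod n, α k = n - 1) :
    (∀ i j : ZMod n,
        ∑ k : ZMod n, α (i - k) * α (j - k) = (if i = j then 1 else 0) + n - 2) ↔
      (∀ k : ZMod n, k ≠ 0 → ‖c k‖ = 1) := by
  have hn0 : (n : ℂ) ≠ 0 := Nat.cast_ne_zero.mpr (NeZero.ne n)
  set A : ZMod n → ℝ := fun d => ∑ m : ZMod n, α (d + m) * α m with hA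
  have hc' : ∀ k, c k = ∑ l : ZMod n, ee n (-(k*l)) * (α l : ℂ) := fun k => hc k
  have hcconj : ∀ k, (starRingEnd ℂ) (c k) = ∑ m : ZMod n, ee n (k*m) * (α m : ℂ) := by
    intro k
    rw [hc' k, map_sum]
    refine Finset.sum_congr rfl fun m _ => ?_
    rw [map_mul, conj_ee, Complex.conj_ofReal, neg_neg]
  have hAc : ∀ d : ZMod n, (A d : ℂ) = ∑ m : ZMod n, (α (d + m) : ℂ) * (α m : ℂ) := by
    intro d; rw [hA]; push_cast; rfl
  have hF : ∀ k, c k * (starRingEnd ℂ) (c k) = ∑ d : ZMod n, ee n (-(k*d)) * (A d : ℂ) := by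
    intro k
    calc c k * (starRingEnd ℂ) (c k)
        = ∑ l : ZMod n, ∑ m : ZMod n,
            (ee n (-(k*l)) * (α l : ℂ)) * (ee n (k*m) * (α m : ℂ)) := by
          rw [hcconj k, hc' k, Finset.sum_mul_sum]
      _ = ∑ m : ZMod n, ∑ l : ZMod n,
            (ee n (-(k*l)) * (α l : ℂ)) * (ee n (k*m) * (α m : ℂ)) := Finset.sum_comm
      _ = ∑ m : ZMod n, ∑ d : ZMod n, ee n (-(k*d)) * ((α (d+m) : ℂ) * (α m : ℂ)) := by
          refine Finset.sum_congr rfl fun m _ => ?_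
          refine Fintype.sum_equiv (Equiv.subRight m) _ _ fun l => ?_
          simp only [Equiv.subRight_apply]
          have h1 : (-(k * l)) + k * m = -(k * (l - m)) := by ring
          have h2 : l - m + m = l := by ring
          rw [mul_mul_mul_comm, ← ee_add, h1, h2]
      _ = ∑ d : ZMod n, ∑ m : ZMod n, ee n (-(k*d)) * ((α (d+m) : ℂ) * (α m : ℂ)) :=
          Finset.sum_comm
      _ = ∑ d : ZMod n, ee n (-(k*d)) * (A d : ℂ) := by
          refine Finset.sum_congr rfl fun d _ => ?_
          rw [hAc d, Finset.mul_sum]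
  have hre : ∀ i j : ZMod n, ∑ k : ZMod n, α (i - k) * α (j - k) = A (i - j) := by
    intro i j
    rw [hA]
    refine Fintype.sum_equiv (Equiv.subLeft j) _ _ fun k => ?_
    simp only [Equiv.subLeft_apply]
    have h1 : (i - j) + (j - k) = i - k := by ring
    rw [h1]
  constructor
  · intro hP k hk
    have hAval : ∀ d : ZMod n, A d = (if d = 0 then 1 else 0) + (n:ℝ) - 2 := by
      intro d
      have h := hP d 0
      rw [hre d 0, sub_zero] at h
      exact h
    have h1 : c k * (starRingEnd ℂ) (c k) = 1 := by
      rw [hF k]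
      have hterm : ∀ d : ZMod n, ee n (-(k*d)) * (A d : ℂ)
          = (if d = 0 then ee n (-(k*d)) else 0) + ((n:ℂ) - 2) * ee n (-(k*d)) := by
        intro d
        rw [hAval d]
        split_ifs with h <;> push_cast <;> ring
      rw [Finset.sum_congr rfl fun d _ => hterm d, Finset.sum_add_distrib]
      have hs1 : ∑ d : ZMod n, (if d = 0 then ee n (-(k*d)) else 0) = 1 := by
        rw [Finset.sum_ite_eq' Finset.univ (0 : ZMod n) (fun d => ee n (-(k*d)))]
        simp [ee_zero n]
      have hs2 : ∑ d : ZMod n, ((n:ℂ) - 2) * ee n (-(k*d)) = 0 := by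
        rw [← Finset.mul_sum]
        have : ∑ d : ZMod n, ee n (-(k*d)) = ∑ d : ZMod n, ee n ((-k)*d) := by
          simp only [neg_mul]
        rw [this, orth n (-k), if_neg (neg_ne_zero.mpr hk), mul_zero]
      rw [hs1, hs2, add_zero]
    have h2 : Complex.normSq (c k) = 1 := by
      have := (Complex.mul_conj (c k)).symm.trans h1
      exact_mod_cast this
    rw [Complex.norm_def, h2, Real.sqrt_one]
  · intro hQ i j
    have hc0 : c 0 * (starRingEnd ℂ) (c 0) = ((n:ℂ) - 1)^2 := by
      have h0 : c 0 = ((n - 1 : ℝ) : ℂ) := by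
        rw [hc' 0]
        simp only [zero_mul, neg_zero, ee_zero n, one_mul]
        rw [← Complex.ofReal_sum, hsum]
      rw [h0, Complex.conj_ofReal]
      push_cast
      ring
    have hFk : ∀ k : ZMod n, k ≠ 0 → c k * (starRingEnd ℂ) (c k) = 1 := by
      intro k hk
      rw [Complex.mul_conj, ← Complex.sq_norm, hQ k hk]
      norm_num
    have hinv : ∀ d : ZMod n, (n : ℂ) * (A d : ℂ)
        = ∑ k : ZMod n, ee n (k * d) * (c k * (starRingEnd ℂ) (c k)) := by
      intro d
      have hswap : ∑ k : ZMod n, ee n (k * d) * (c k * (starRingEnd ℂ) (c k))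
          = ∑ d' : ZMod n, (∑ k : ZMod n, ee n ((d - d') * k)) * (A d' : ℂ) := by
        calc ∑ k : ZMod n, ee n (k * d) * (c k * (starRingEnd ℂ) (c k))
            = ∑ k : ZMod n, ∑ d' : ZMod n, ee n ((d - d')*k) * (A d':ℂ) := by
              refine Finset.sum_congr rfl fun k _ => ?_
              rw [hF k, Finset.mul_sum]
              refine Finset.sum_congr rfl fun d' _ => ?_
              rw [← mul_assoc, ← ee_add]
              have : k * d + -(k * d') = (d - d') * k := by ring
              rw [this]
          _ = ∑ d' : ZMod n, ∑ k : ZMod n, ee n ((d - d')*k) * (A d':ℂ) :=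
              Finset.sum_comm
          _ = ∑ d' : ZMod n, (∑ k : ZMod n, ee n ((d - d') * k)) * (A d' : ℂ) := by
              refine Finset.sum_congr rfl fun d' _ => ?_
              rw [Finset.sum_mul]
      rw [hswap, Finset.sum_congr rfl fun d' _ => by rw [orth n (d - d')]]
      simp only [sub_eq_zero, ite_mul, zero_mul]
      rw [Finset.sum_ite_eq Finset.univ d (fun d' => (n:ℂ) * (A d' : ℂ))]
      simp
    have hsum2 : ∀ d : ZMod n, ∑ k : ZMod n, ee n (k*d) * (c k * (starRingEnd ℂ) (c k))
        = (if d = 0 then (n:ℂ) else 0) + (((n:ℂ)-1)^2 - 1) := by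
      intro d
      have hterm : ∀ k : ZMod n, ee n (k*d) * (c k * (starRingEnd ℂ) (c k))
          = ee n (d*k) + (if k = 0 then ((n:ℂ)-1)^2 - 1 else 0) := by
        intro k
        by_cases hk : k = 0
        · subst hk
          rw [hc0, if_pos rfl]
          simp only [zero_mul, mul_zero, ee_zero n]
          ring
        · rw [hFk k hk, mul_one, if_neg hk, add_zero, mul_comm k d]
      rw [Finset.sum_congr rfl fun k _ => hterm k, Finset.sum_add_distrib, orth n d,
        Finset.sum_ite_eq' Finset.univ (0 : ZMod n) (fun _ => ((n:ℂ)-1)^2 - 1)]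
      simp
    have hAval : ∀ d : ZMod n, A d = (if d = 0 then 1 else 0) + (n:ℝ) - 2 := by
      intro d
      have h := (hinv d).trans (hsum2 d)
      have h2 : (n:ℂ) * (A d:ℂ)
          = (n:ℂ) * ((((if d = 0 then 1 else 0) + (n:ℝ) - 2 : ℝ)) : ℂ) := by
        rw [h]
        split_ifs with hd <;> push_cast <;> ring
      have h3 := mul_left_cancel₀ hn0 h2
      exact_mod_cast h3
    rw [hre i j, hAval (i - j)]
    simp [sub_eq_zero]
end

section
/- Let α : ℤ/nℤ → ℝ with α_k ≥ 0, ∑_k α_k = n-1, and suppose the DFT values c_j = ∑_k ω^{-jk} α_k satisfy |c_j| = 1 for j ≠ 0 and α_k = α_{n-k} for all k. Then c_j ∈ {-1, 1} for all j ≠ 0, and hence the circulant matrix Q with symbol q_0 = α_0, q_k = α_k - 1 (k ≠ 0) is positive semidefinite with eigenvalues λ_0 = 0 and λ_j = c_j + 1 ∈ {0, 2} for j ≠ 0. -/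
open Matrix ComplexOrder

noncomputable def zetaC (n : ℕ) : ℂ := Complex.exp (2 * Real.pi * Complex.I / n)

noncomputable def chiC (n : ℕ) [NeZero n] (a : ZMod n) : ℂ := zetaC n ^ a.val

lemma zetaC_prim (n : ℕ) [NeZero n] : IsPrimitiveRoot (zetaC n) n :=
  Complex.isPrimitiveRoot_exp n (NeZero.ne n)

lemma chiC_add (n : ℕ) [NeZero n] (a b : ZMod n) :
    chiC n (a + b) = chiC n a * chiC n b := by
  unfold chiC
  rw [← pow_add, ZMod.val_add, ← pow_eq_pow_mod _ (zetaC_prim n).pow_eq_one]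

lemma chiC_zero (n : ℕ) [NeZero n] : chiC n 0 = 1 := by
  simp [chiC]

lemma chiC_ne_one (n : ℕ) [NeZero n] {a : ZMod n} (ha : a ≠ 0) : chiC n a ≠ 1 := by
  intro h
  have hd : n ∣ a.val := (zetaC_prim n).pow_eq_one_iff_dvd a.val |>.mp h
  have : a.val = 0 := Nat.eq_zero_of_dvd_of_lt hd (ZMod.val_lt a)
  exact ha ((ZMod.val_eq_zero a).mp this)

lemma chiC_abs (n : ℕ) [NeZero n] (a : ZMod n) : ‖chiC n a‖ = 1 := by
  have h : ‖zetaC n‖ = 1 :=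
    Complex.norm_eq_one_of_pow_eq_one (zetaC_prim n).pow_eq_one (NeZero.ne n)
  simp [chiC, norm_pow, h]

lemma chiC_conj (n : ℕ) [NeZero n] (a : ZMod n) :
    (starRingEnd ℂ) (chiC n a) = chiC n (-a) := by
  have h1 : chiC n a * chiC n (-a) = 1 := by
    rw [← chiC_add, add_neg_cancel, chiC_zero]
  have h2 : (chiC n a)⁻¹ = (starRingEnd ℂ) (chiC n a) :=
    Complex.inv_eq_conj (chiC_abs n a)
  rw [← h2]
  exact (eq_inv_of_mul_eq_one_left (by rw [mul_comm] at h1; exact h1)).symm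

lemma chiC_sum (n : ℕ) [NeZero n] (a : ZMod n) :
    ∑ j : ZMod n, chiC n (j * a) = if a = 0 then (n : ℂ) else 0 := by
  split_ifs with h
  · subst h
    simp [chiC_zero, Finset.card_univ, ZMod.card]
  · have key : chiC n a * ∑ j : ZMod n, chiC n (j * a) = ∑ j : ZMod n, chiC n (j * a) := by
      rw [Finset.mul_sum]
      calc ∑ j : ZMod n, chiC n a * chiC n (j * a)
          = ∑ j : ZMod n, chiC n ((j + 1) * a) := by
            refine Finset.sum_congr rfl fun j _ => ?_
            rw [← chiC_add]; congr 1; ring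
        _ = ∑ j : ZMod n, chiC n (j * a) :=
            Fintype.sum_equiv (Equiv.addRight (1 : ZMod n)) _ _ (fun j => rfl)
    have h0 : (chiC n a - 1) * ∑ j : ZMod n, chiC n (j * a) = 0 := by
      rw [sub_mul, one_mul, key, sub_self]
    rcases mul_eq_zero.mp h0 with h1 | h1
    · exact absurd (sub_eq_zero.mp h1) (chiC_ne_one n h)
    · exact h1

lemma inv_dft (n : ℕ) [NeZero n] (q : ZMod n → ℂ) (a : ZMod n) :
    ∑ j : ZMod n, (∑ m : ZMod n, q m * chiC n (-(j * m))) * chiC n (j * a)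
      = n * q a := by
  have step1 : ∀ j : ZMod n,
      (∑ m : ZMod n, q m * chiC n (-(j * m))) * chiC n (j * a)
        = ∑ m : ZMod n, q m * chiC n (j * (a - m)) := by
    intro j
    rw [Finset.sum_mul]
    refine Finset.sum_congr rfl fun m _ => ?_
    rw [mul_assoc, ← chiC_add]
    congr 2; ring
  calc ∑ j : ZMod n, (∑ m : ZMod n, q m * chiC n (-(j * m))) * chiC n (j * a)
      = ∑ j : ZMod n, ∑ m : ZMod n, q m * chiC n (j * (a - m)) :=
        Finset.sum_congr rfl fun j _ => step1 j
    _ = ∑ m : ZMod n, ∑ j : ZMod n, q m * chiC n (j * (a - m)) := Finset.sum_comm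
    _ = ∑ m : ZMod n, q m * (if a - m = 0 then (n : ℂ) else 0) := by
        refine Finset.sum_congr rfl fun m _ => ?_
        rw [← Finset.mul_sum, chiC_sum]
    _ = n * q a := by
        have h2 : ∀ m : ZMod n, q m * (if a - m = 0 then (n : ℂ) else 0)
            = if m = a then q m * n else 0 := by
          intro m
          by_cases hm : m = a
          · simp [hm]
          · simp only [hm, if_false, sub_eq_zero]
            rw [if_neg (fun h => hm h.symm), mul_zero]
        rw [Finset.sum_congr rfl fun m _ => h2 m,
          Finset.sum_ite_eq' Finset.univ a fun m => q m * (n : ℂ)]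
        simp [mul_comm]

theorem stmt_17 (n : ℕ) [NeZero n] (hn : 2 ≤ n) (α : ZMod n → ℝ) (c : ZMod n → ℂ)
    (hc : ∀ j : ZMod n,
      c j = ∑ k : ZMod n,
        Complex.exp (2 * Real.pi * Complex.I / n) ^ (-(j * k)).val * (α k : ℂ))
    (hpos : ∀ k : ZMod n, 0 ≤ α k)
    (hsum : ∑ k : ZMod n, α k = n - 1)
    (habs : ∀ j : ZMod n, j ≠ 0 → ‖c j‖ = 1)
    (hsym : ∀ k : ZMod n, α k = α (-k)) :
    (∀ j : ZMod n, j ≠ 0 → c j = 1 ∨ c j = -1) ∧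
      (Matrix.circulant fun k : ZMod n =>
          if k = 0 then (α 0 : ℂ) else (α k : ℂ) - 1).PosSemidef ∧
      (∀ j : ZMod n,
        (Matrix.circulant fun k : ZMod n =>
            if k = 0 then (α 0 : ℂ) else (α k : ℂ) - 1).mulVec
          (fun l : ZMod n => Complex.exp (2 * Real.pi * Complex.I / n) ^ (j * l).val) =
        (if j = 0 then 0 else c j + 1) •
          fun l : ZMod n => Complex.exp (2 * Real.pi * Complex.I / n) ^ (j * l).val) ∧
      (∀ j : ZMod n, j ≠ 0 → c j + 1 = 0 ∨ c j + 1 = 2) := by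
  have hn0 : (n : ℂ) ≠ 0 := Nat.cast_ne_zero.mpr (NeZero.ne n)
  set q : ZMod n → ℂ := fun k => if k = 0 then (α 0 : ℂ) else (α k : ℂ) - 1 with hq
  have hcr : ∀ j : ZMod n, c j = ∑ k : ZMod n, chiC n (-(j * k)) * (α k : ℂ) := fun j => hc j
  -- c j is real
  have hreal : ∀ j : ZMod n, (starRingEnd ℂ) (c j) = c j := by
    intro j
    rw [hcr j, map_sum]
    calc ∑ k : ZMod n, (starRingEnd ℂ) (chiC n (-(j * k)) * (α k : ℂ))
        = ∑ k : ZMod n, chiC n (j * k) * (α k : ℂ) := by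
          refine Finset.sum_congr rfl fun k _ => ?_
          rw [_root_.map_mul, chiC_conj, neg_neg, Complex.conj_ofReal]
      _ = ∑ k : ZMod n, chiC n (-(j * k)) * (α k : ℂ) := by
          refine Fintype.sum_equiv (Equiv.neg (ZMod n)) _ _ fun k => ?_
          simp only [Equiv.neg_apply]
          rw [show -(j * -k) = j * k from by ring, ← hsym k]
  have hpm : ∀ j : ZMod n, j ≠ 0 → c j = 1 ∨ c j = -1 := by
    intro j hj
    have hre : c j = ((c j).re : ℂ) := (Complex.conj_eq_iff_re.mp (hreal j)).symm
    have habs' := habs j hj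
    rw [hre, Complex.norm_real, Real.norm_eq_abs] at habs'
    rcases (abs_eq zero_le_one).mp habs' with h | h
    · left; rw [hre, h, Complex.ofReal_one]
    · right; rw [hre, h]; push_cast; ring
  have hpm2 : ∀ j : ZMod n, j ≠ 0 → c j + 1 = 0 ∨ c j + 1 = 2 := by
    intro j hj
    rcases hpm j hj with h | h
    · right; rw [h]; ring
    · left; rw [h]; ring
  -- the eigenvalues
  set Λ : ZMod n → ℂ := fun j => ∑ m : ZMod n, q m * chiC n (-(j * m)) with hΛdef
  have hql : ∀ m : ZMod n, q m = (α m : ℂ) - (if m = 0 then 0 else 1) := by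
    intro m; by_cases hm : m = 0 <;> simp [hq, hm]
  have hΛ : ∀ j : ZMod n, Λ j = if j = 0 then 0 else c j + 1 := by
    intro j
    have e1 : Λ j = (∑ m : ZMod n, chiC n (-(j * m)) * (α m : ℂ))
        - ∑ m : ZMod n, (if m = 0 then (0 : ℂ) else 1) * chiC n (-(j * m)) := by
      rw [hΛdef, ← Finset.sum_sub_distrib]
      refine Finset.sum_congr rfl fun m _ => ?_
      rw [hql m]; ring
    have e2 : ∑ m : ZMod n, (if m = 0 then (0 : ℂ) else 1) * chiC n (-(j * m))
        = (∑ m : ZMod n, chiC n (m * (-j))) - 1 := by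
      have h3 : ∀ m : ZMod n, (if m = 0 then (0 : ℂ) else 1) * chiC n (-(j * m))
          = chiC n (m * (-j)) - (if m = 0 then 1 else 0) := by
        intro m
        by_cases hm : m = 0
        · simp [hm, chiC_zero]
        · simp only [hm, if_neg hm, if_false, one_mul, sub_zero]
          congr 1; ring
      rw [Finset.sum_congr rfl fun m _ => h3 m, Finset.sum_sub_distrib]
      congr 1
      simp
    rw [e1, e2, chiC_sum n (-j)]
    by_cases hj : j = 0
    · subst hj
      rw [if_pos (neg_zero), if_pos rfl]
      have h4 : ∑ m : ZMod n, chiC n (-((0 : ZMod n) * m)) * (α m : ℂ) = (n : ℂ) - 1 := by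
        have h5 : ∀ m : ZMod n, chiC n (-((0 : ZMod n) * m)) * (α m : ℂ) = (α m : ℂ) := by
          intro m; rw [zero_mul, neg_zero, chiC_zero, one_mul]
        rw [Finset.sum_congr rfl fun m _ => h5 m]
        calc ∑ m : ZMod n, ((α m : ℝ) : ℂ) = ((∑ m : ZMod n, α m : ℝ) : ℂ) := by push_cast; rfl
          _ = (n : ℂ) - 1 := by rw [hsum]; push_cast; ring
      rw [h4]; ring
    · rw [if_neg (by simpa using hj), if_neg hj, ← hcr j]; ring
  -- eigenvector equation
  have heig : ∀ j : ZMod n, (Matrix.circulant q).mulVec (fun l : ZMod n => chiC n (j * l))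
      = Λ j • fun l : ZMod n => chiC n (j * l) := by
    intro j
    funext i
    show ∑ l : ZMod n, q (i - l) * chiC n (j * l) = Λ j * chiC n (j * i)
    calc ∑ l : ZMod n, q (i - l) * chiC n (j * l)
        = ∑ m : ZMod n, q m * chiC n (j * (i - m)) := by
          refine (Fintype.sum_equiv (Equiv.subLeft i) _ _ fun m => ?_).symm
          simp [sub_sub_cancel]
      _ = ∑ m : ZMod n, (q m * chiC n (-(j * m))) * chiC n (j * i) := by
          refine Finset.sum_congr rfl fun m _ => ?_
          rw [mul_assoc, ← chiC_add]
          congr 2; ring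
      _ = Λ j * chiC n (j * i) := by rw [← Finset.sum_mul, hΛdef]
  -- inverse DFT of q
  have hinv : ∀ a : ZMod n, q a = (∑ j : ZMod n, Λ j * chiC n (j * a)) / n := by
    intro a
    rw [eq_div_iff hn0, mul_comm]
    exact (inv_dft n q a).symm
  -- Hermitian
  have hqsymm : ∀ k : ZMod n, q (-k) = q k := by
    intro k
    by_cases hk : k = 0
    · simp [hk]
    · rw [hq]
      simp only [neg_eq_zero, hk, if_neg hk, if_false, ← hsym k]
  have hherm : (Matrix.circulant q).IsHermitian := by
    ext i l
    rw [Matrix.conjTranspose_apply, Matrix.circulant_apply, Matrix.circulant_apply,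
      show l - i = -(i - l) from by ring, hqsymm]
    by_cases hk : i - l = 0 <;>
      simp [hq, hk, Complex.conj_ofReal, RCLike.star_def, map_sub]
  -- quadratic form
  have hform : ∀ x : ZMod n → ℂ, 0 ≤ dotProduct (star x) ((Matrix.circulant q).mulVec x) := by
    intro x
    have hconj_s : ∀ j : ZMod n, ∑ i : ZMod n, chiC n (j * i) * (starRingEnd ℂ) (x i)
        = (starRingEnd ℂ) (∑ l : ZMod n, chiC n (-(j * l)) * x l) := by
      intro j
      rw [map_sum]
      refine Finset.sum_congr rfl fun i _ => ?_
      rw [_root_.map_mul, chiC_conj, neg_neg]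
    have key : dotProduct (star x) ((Matrix.circulant q).mulVec x)
        = ∑ j : ZMod n, (Λ j * ((starRingEnd ℂ) (∑ l : ZMod n, chiC n (-(j * l)) * x l)
            * (∑ l : ZMod n, chiC n (-(j * l)) * x l))) / n := by
      calc dotProduct (star x) ((Matrix.circulant q).mulVec x)
          = ∑ i : ZMod n, (starRingEnd ℂ) (x i) * ∑ l : ZMod n, q (i - l) * x l := rfl
        _ = ∑ i : ZMod n, ∑ l : ZMod n, (starRingEnd ℂ) (x i) * (q (i - l) * x l) := by
            simp [Finset.mul_sum]
        _ = ∑ i : ZMod n, ∑ l : ZMod n, ∑ j : ZMod n,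
              (Λ j * (chiC n (j * i) * (starRingEnd ℂ) (x i)) * (chiC n (-(j * l)) * x l)) / n := by
            refine Finset.sum_congr rfl fun i _ => Finset.sum_congr rfl fun l _ => ?_
            rw [hinv (i - l), Finset.sum_div, Finset.sum_mul, Finset.mul_sum]
            refine Finset.sum_congr rfl fun j _ => ?_
            rw [show j * (i - l) = j * i + -(j * l) from by ring, chiC_add]
            ring
        _ = ∑ j : ZMod n, ∑ i : ZMod n, ∑ l : ZMod n,
              (Λ j * (chiC n (j * i) * (starRingEnd ℂ) (x i)) * (chiC n (-(j * l)) * x l)) / n := by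
            rw [show (∑ i : ZMod n, ∑ l : ZMod n, ∑ j : ZMod n,
                (Λ j * (chiC n (j * i) * (starRingEnd ℂ) (x i)) * (chiC n (-(j * l)) * x l)) / n)
                = ∑ i : ZMod n, ∑ j : ZMod n, ∑ l : ZMod n,
                (Λ j * (chiC n (j * i) * (starRingEnd ℂ) (x i)) * (chiC n (-(j * l)) * x l)) / n
              from Finset.sum_congr rfl fun i _ => Finset.sum_comm]
            exact Finset.sum_comm
        _ = ∑ j : ZMod n, (Λ j * ((∑ i : ZMod n, chiC n (j * i) * (starRingEnd ℂ) (x i))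
              * (∑ l : ZMod n, chiC n (-(j * l)) * x l))) / n := by
            refine Finset.sum_congr rfl fun j _ => ?_
            simp only [← Finset.sum_div]
            congr 1
            rw [Finset.sum_mul_sum, Finset.mul_sum]
            refine Finset.sum_congr rfl fun i _ => ?_
            rw [Finset.mul_sum]
            refine Finset.sum_congr rfl fun l _ => ?_
            ring
        _ = ∑ j : ZMod n, (Λ j * ((starRingEnd ℂ) (∑ l : ZMod n, chiC n (-(j * l)) * x l)
              * (∑ l : ZMod n, chiC n (-(j * l)) * x l))) / n := by
            refine Finset.sum_congr rfl fun j _ => ?_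
            rw [hconj_s j]
    rw [key]
    refine Finset.sum_nonneg fun j _ => ?_
    have h1 : 0 ≤ Λ j := by
      rw [hΛ j]
      split_ifs with hj
      · exact le_refl _
      · rcases hpm2 j hj with h | h
        · rw [h]
        · rw [h, show (2 : ℂ) = ((2 : ℝ) : ℂ) from by norm_num]
          exact Complex.zero_le_real.mpr (by norm_num)
    have h2 : 0 ≤ (starRingEnd ℂ) (∑ l : ZMod n, chiC n (-(j * l)) * x l)
        * (∑ l : ZMod n, chiC n (-(j * l)) * x l) :=
      star_mul_self_nonneg _
    have h3 : (0 : ℂ) ≤ Complex.ofReal ((n : ℝ)⁻¹) := Complex.zero_le_real.mpr (by positivity)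
    rw [div_eq_mul_inv, show ((n : ℂ))⁻¹ = Complex.ofReal ((n : ℝ)⁻¹) from by push_cast; ring]
    exact mul_nonneg (mul_nonneg h1 h2) h3
  refine ⟨hpm, Matrix.PosSemidef.of_dotProduct_mulVec_nonneg hherm hform, fun j => ?_, hpm2⟩
  have h := heig j
  rw [hΛ j] at h
  exact h
end
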